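/- Let Q⋆ be a probability distribution on finite 𝒴, P a distribution on finite 𝒳, and Q a channel from 𝒳 to 𝒴, all with positive entries. Define μ₀(t) = −log Σ_{x,y} P(x) Q⋆(y)^{1−t} Q(y|x)^{t}. Then μ₀ is concave on [0,1], μ₀(1) = 0, and (dμ₀/dt)(1) = −I(P,Q) − D([PQ]‖Q⋆), where [PQ](y) = Σ_x P(x)Q(y|x) and I(P,Q) = Σ_{x,y} P(x)Q(y|x) log(Q(y|x)/[PQ](y)). Consequently, sup_{t∈[0,1]} μ₀(t) ≤ I(P,Q) + D([PQ]‖Q⋆). -/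

import Mathlib

open Real Finset

private lemma holder_two' {ι : Type*} (s : Finset ι) (A B : ι → ℝ)
    (hA : ∀ i ∈ s, 0 < A i) (hB : ∀ i ∈ s, 0 < B i) (hs : s.Nonempty)
    {a b : ℝ} (ha : 0 ≤ a) (hb : 0 ≤ b) (hab : a + b = 1) :
    ∑ i ∈ s, A i ^ a * B i ^ b ≤ (∑ i ∈ s, A i) ^ a * (∑ i ∈ s, B i) ^ b := by
  have hGA : 0 < ∑ i ∈ s, A i := Finset.sum_pos hA hs
  have hGB : 0 < ∑ i ∈ s, B i := Finset.sum_pos hB hs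
  have key : ∑ i ∈ s, (A i / (∑ i ∈ s, A i)) ^ a * (B i / (∑ i ∈ s, B i)) ^ b ≤ 1 := by
    have h1 : ∀ i ∈ s, (A i / (∑ i ∈ s, A i)) ^ a * (B i / (∑ i ∈ s, B i)) ^ b ≤
        a * (A i / (∑ i ∈ s, A i)) + b * (B i / (∑ i ∈ s, B i)) := fun i hi =>
      Real.geom_mean_le_arith_mean2_weighted ha hb
        (div_nonneg (hA i hi).le hGA.le) (div_nonneg (hB i hi).le hGB.le) hab
    calc ∑ i ∈ s, (A i / (∑ i ∈ s, A i)) ^ a * (B i / (∑ i ∈ s, B i)) ^ b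
        ≤ ∑ i ∈ s, (a * (A i / (∑ i ∈ s, A i)) + b * (B i / (∑ i ∈ s, B i))) :=
          Finset.sum_le_sum h1
      _ = 1 := by
          rw [Finset.sum_add_distrib, ← Finset.mul_sum, ← Finset.mul_sum,
            ← Finset.sum_div, ← Finset.sum_div, div_self hGA.ne', div_self hGB.ne',
            mul_one, mul_one, hab]
  have hrw : ∀ i ∈ s, (A i / (∑ i ∈ s, A i)) ^ a * (B i / (∑ i ∈ s, B i)) ^ b =
      A i ^ a * B i ^ b / ((∑ i ∈ s, A i) ^ a * (∑ i ∈ s, B i) ^ b) := by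
    intro i hi
    rw [Real.div_rpow (hA i hi).le hGA.le, Real.div_rpow (hB i hi).le hGB.le,
      div_mul_div_comm]
  rw [Finset.sum_congr rfl hrw, ← Finset.sum_div, div_le_one (by positivity)] at key
  exact key

private lemma logsumexp_convex' {ι : Type*} [Fintype ι] [Nonempty ι] (c r : ι → ℝ)
    (hc : ∀ i, 0 < c i) :
    ConvexOn ℝ Set.univ (fun t => Real.log (∑ i, c i * Real.exp (t * r i))) := by
  have hg : ∀ t, 0 < ∑ i, c i * Real.exp (t * r i) := fun t =>
    Finset.sum_pos (fun i _ => mul_pos (hc i) (Real.exp_pos _)) Finset.univ_nonempty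
  refine ⟨convex_univ, fun s _ u _ a b ha hb hab => ?_⟩
  simp only [smul_eq_mul]
  have key : ∑ i, c i * Real.exp ((a * s + b * u) * r i) ≤
      (∑ i, c i * Real.exp (s * r i)) ^ a * (∑ i, c i * Real.exp (u * r i)) ^ b := by
    have hterm : ∀ i, c i * Real.exp ((a * s + b * u) * r i) =
        (c i * Real.exp (s * r i)) ^ a * (c i * Real.exp (u * r i)) ^ b := by
      intro i
      rw [Real.mul_rpow (hc i).le (Real.exp_pos _).le,
        Real.mul_rpow (hc i).le (Real.exp_pos _).le,
        ← Real.exp_mul, ← Real.exp_mul, mul_mul_mul_comm,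
        ← Real.rpow_add (hc i), hab, Real.rpow_one, ← Real.exp_add]
      ring_nf
    calc ∑ i, c i * Real.exp ((a * s + b * u) * r i)
        = ∑ i, (c i * Real.exp (s * r i)) ^ a * (c i * Real.exp (u * r i)) ^ b :=
          Finset.sum_congr rfl fun i _ => hterm i
      _ ≤ _ := holder_two' Finset.univ _ _
          (fun i _ => mul_pos (hc i) (Real.exp_pos _))
          (fun i _ => mul_pos (hc i) (Real.exp_pos _)) Finset.univ_nonempty
          ha hb hab
  calc Real.log (∑ i, c i * Real.exp ((a * s + b * u) * r i))
      ≤ Real.log ((∑ i, c i * Real.exp (s * r i)) ^ a *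
          (∑ i, c i * Real.exp (u * r i)) ^ b) :=
        Real.log_le_log (hg _) key
    _ = a * Real.log (∑ i, c i * Real.exp (s * r i)) +
        b * Real.log (∑ i, c i * Real.exp (u * r i)) := by
        rw [Real.log_mul (Real.rpow_pos_of_pos (hg s) a).ne'
          (Real.rpow_pos_of_pos (hg u) b).ne', Real.log_rpow (hg s), Real.log_rpow (hg u)]

private lemma exp_form' {b q t u : ℝ} (hb : 0 < b) (hq : 0 < q) :
    b ^ (1 - t) * q ^ t = (b ^ (1 - u) * q ^ u) * Real.exp ((t - u) * (Real.log q - Real.log b)) := by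
  rw [Real.rpow_def_of_pos hb, Real.rpow_def_of_pos hq, Real.rpow_def_of_pos hb,
    Real.rpow_def_of_pos hq, ← Real.exp_add, ← Real.exp_add, ← Real.exp_add]
  congr 1
  ring

/-- `μ₀(t) = -log Σ_{x,y} P(x) Q⋆(y)^{1-t} Q(y|x)^t` is concave on `[0,1]`, `μ₀(1) = 0`,
its derivative at `t = 1` is `-I(P,Q) - D([PQ]‖Q⋆)`, and consequently
`sup_{t∈[0,1]} μ₀(t) ≤ I(P,Q) + D([PQ]‖Q⋆)`. -/
theorem stmt_11 {𝒳 𝒴 : Type*} [Fintype 𝒳] [Fintype 𝒴]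
    (P : 𝒳 → ℝ) (Qstar : 𝒴 → ℝ) (Q : 𝒳 → 𝒴 → ℝ)
    (hP : ∀ x, 0 < P x) (hPs : ∑ x, P x = 1)
    (hQstar : ∀ y, 0 < Qstar y) (hQstars : ∑ y, Qstar y = 1)
    (hQ : ∀ x y, 0 < Q x y) (hQs : ∀ x, ∑ y, Q x y = 1) :
    let μ₀ : ℝ → ℝ := fun t => -Real.log (∑ x, ∑ y, P x * Qstar y ^ (1 - t) * Q x y ^ t)
    let PQ : 𝒴 → ℝ := fun y => ∑ x, P x * Q x y
    let I : ℝ := ∑ x, ∑ y, P x * Q x y * Real.log (Q x y / PQ y)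
    let Dv : ℝ := ∑ y, PQ y * Real.log (PQ y / Qstar y)
    ConcaveOn ℝ (Set.Icc (0:ℝ) 1) μ₀ ∧
    μ₀ 1 = 0 ∧
    HasDerivAt μ₀ (-I - Dv) 1 ∧
    (∀ t ∈ Set.Icc (0:ℝ) 1, μ₀ t ≤ I + Dv) := by
  intro μ₀ PQ I Dv
  have h𝒳 : Nonempty 𝒳 := by
    by_contra h
    rw [not_nonempty_iff] at h
    simp [Finset.univ_eq_empty] at hPs
  have h𝒴 : Nonempty 𝒴 := by
    by_contra h
    rw [not_nonempty_iff] at h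
    simp [Finset.univ_eq_empty] at hQstars
  set f : ℝ → ℝ := fun t => ∑ x, ∑ y, P x * Qstar y ^ (1 - t) * Q x y ^ t with hf
  set S : ℝ := ∑ x, ∑ y, P x * Q x y * (Real.log (Q x y) - Real.log (Qstar y)) with hS
  have hPQpos : ∀ y, 0 < PQ y := fun y =>
    Finset.sum_pos (fun x _ => mul_pos (hP x) (hQ x y)) Finset.univ_nonempty
  have hf1 : f 1 = 1 := by
    simp only [hf, sub_self, Real.rpow_zero, Real.rpow_one, mul_one, one_mul]
    simp_rw [← Finset.mul_sum, hQs, mul_one, hPs]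
  -- S = I + Dv
  have hI : I = ∑ x, ∑ y, P x * Q x y * (Real.log (Q x y) - Real.log (PQ y)) :=
    Finset.sum_congr rfl fun x _ => Finset.sum_congr rfl fun y _ => by
      rw [Real.log_div (hQ x y).ne' (hPQpos y).ne']
  have hDv : Dv = ∑ x, ∑ y, P x * Q x y * (Real.log (PQ y) - Real.log (Qstar y)) := by
    calc Dv = ∑ y, ∑ x, P x * Q x y * (Real.log (PQ y) - Real.log (Qstar y)) := by
          refine Finset.sum_congr rfl fun y _ => ?_
          rw [Real.log_div (hPQpos y).ne' (hQstar y).ne', ← Finset.sum_mul]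
      _ = _ := Finset.sum_comm
  have hSID : S = I + Dv := by
    rw [hS, hI, hDv, ← Finset.sum_add_distrib]
    refine Finset.sum_congr rfl fun x _ => ?_
    rw [← Finset.sum_add_distrib]
    exact Finset.sum_congr rfl fun y _ => by ring
  -- 0 ≤ S
  have hSnn : 0 ≤ S := by
    have key : ∀ (x : 𝒳) (y : 𝒴), P x * Q x y * (Real.log (Qstar y) - Real.log (Q x y)) ≤
        P x * Qstar y - P x * Q x y := by
      intro x y
      have h := Real.log_le_sub_one_of_pos (div_pos (hQstar y) (hQ x y))
      rw [Real.log_div (hQstar y).ne' (hQ x y).ne'] at h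
      have hw : (0:ℝ) ≤ P x * Q x y := (mul_pos (hP x) (hQ x y)).le
      calc P x * Q x y * (Real.log (Qstar y) - Real.log (Q x y))
          ≤ P x * Q x y * (Qstar y / Q x y - 1) := mul_le_mul_of_nonneg_left h hw
        _ = P x * (Qstar y / Q x y * Q x y) - P x * Q x y := by ring
        _ = P x * Qstar y - P x * Q x y := by
            rw [div_mul_cancel₀ _ (hQ x y).ne']
    have hsum0 : ∑ x, ∑ y, (P x * Qstar y - P x * Q x y) = 0 := by
      simp_rw [Finset.sum_sub_distrib, ← Finset.mul_sum, hQstars, hQs]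
      simp
    have hneg : -S ≤ 0 := by
      calc -S = ∑ x, ∑ y, P x * Q x y * (Real.log (Qstar y) - Real.log (Q x y)) := by
            rw [hS, ← Finset.sum_neg_distrib]
            refine Finset.sum_congr rfl fun x _ => ?_
            rw [← Finset.sum_neg_distrib]
            exact Finset.sum_congr rfl fun y _ => by ring
        _ ≤ ∑ x, ∑ y, (P x * Qstar y - P x * Q x y) :=
            Finset.sum_le_sum fun x _ => Finset.sum_le_sum fun y _ => key x y
        _ = 0 := hsum0
    linarith
  -- exponential representation with weights P*Q
  have hrep : ∀ t, f t = ∑ p : 𝒳 × 𝒴, (P p.1 * Q p.1 p.2) *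
      Real.exp ((t - 1) * (Real.log (Q p.1 p.2) - Real.log (Qstar p.2))) := by
    intro t
    rw [Fintype.sum_prod_type]
    show (∑ x, ∑ y, P x * Qstar y ^ (1 - t) * Q x y ^ t) = _
    refine Finset.sum_congr rfl fun x _ => Finset.sum_congr rfl fun y _ => ?_
    have h := exp_form' (t := t) (u := 1) (hQstar y) (hQ x y)
    simp only [sub_self, Real.rpow_zero, Real.rpow_one, one_mul] at h
    rw [mul_assoc, h, ← mul_assoc]
  -- weights sum to 1
  have hw1 : ∑ p : 𝒳 × 𝒴, P p.1 * Q p.1 p.2 = 1 := by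
    rw [Fintype.sum_prod_type]
    simp_rw [← Finset.mul_sum, hQs, mul_one]
    exact hPs
  have hSprod : S = ∑ p : 𝒳 × 𝒴, (P p.1 * Q p.1 p.2) *
      (Real.log (Q p.1 p.2) - Real.log (Qstar p.2)) := by
    rw [hS, Fintype.sum_prod_type]
  -- Jensen lower bound
  have hJen : ∀ t, Real.exp ((t - 1) * S) ≤ f t := by
    intro t
    have jensen := convexOn_exp.map_sum_le (t := Finset.univ)
      (w := fun p : 𝒳 × 𝒴 => P p.1 * Q p.1 p.2)
      (p := fun p : 𝒳 × 𝒴 => (t - 1) * (Real.log (Q p.1 p.2) - Real.log (Qstar p.2)))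
      (fun p _ => (mul_pos (hP p.1) (hQ p.1 p.2)).le) hw1 (fun p _ => Set.mem_univ _)
    simp only [smul_eq_mul] at jensen
    have h1 : ∑ p : 𝒳 × 𝒴, (P p.1 * Q p.1 p.2) *
        ((t - 1) * (Real.log (Q p.1 p.2) - Real.log (Qstar p.2))) = (t - 1) * S := by
      rw [hSprod, Finset.mul_sum]
      exact Finset.sum_congr rfl fun p _ => by ring
    rw [h1] at jensen
    calc Real.exp ((t - 1) * S) ≤ ∑ p : 𝒳 × 𝒴, (P p.1 * Q p.1 p.2) *
          Real.exp ((t - 1) * (Real.log (Q p.1 p.2) - Real.log (Qstar p.2))) := jensen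
      _ = f t := (hrep t).symm
  -- derivative of f at 1
  have hterm : ∀ (x : 𝒳) (y : 𝒴),
      HasDerivAt (fun t : ℝ => P x * (Qstar y ^ (1 - t) * Q x y ^ t))
        (P x * Q x y * (Real.log (Q x y) - Real.log (Qstar y))) 1 := by
    intro x y
    have hb := hQstar y
    have hq := hQ x y
    have hinner : HasDerivAt (fun t : ℝ => 1 - t) (-1) 1 := (hasDerivAt_id 1).const_sub 1
    have h1 := (Real.hasStrictDerivAt_const_rpow hb ((1:ℝ) - 1)).hasDerivAt.comp 1 hinner
    have h2 := (Real.hasStrictDerivAt_const_rpow hq (1:ℝ)).hasDerivAt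
    have h3 := (h1.mul h2).const_mul (P x)
    simp only [Function.comp_apply] at h3
    have heq : P x * (Qstar y ^ ((1:ℝ) - 1) * Real.log (Qstar y) * -1 * Q x y ^ (1:ℝ) +
        Qstar y ^ ((1:ℝ) - 1) * (Q x y ^ (1:ℝ) * Real.log (Q x y))) =
        P x * Q x y * (Real.log (Q x y) - Real.log (Qstar y)) := by
      norm_num [Real.rpow_one]
      ring
    rw [heq] at h3
    exact h3
  have hF : HasDerivAt f S 1 := by
    have hfg : f = fun t => ∑ x, ∑ y, P x * (Qstar y ^ (1 - t) * Q x y ^ t) := by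
      funext t
      exact Finset.sum_congr rfl fun x _ => Finset.sum_congr rfl fun y _ => mul_assoc _ _ _
    rw [hfg, hS]
    exact HasDerivAt.fun_sum fun x _ => HasDerivAt.fun_sum fun y _ => hterm x y
  refine ⟨?_, ?_, ?_, ?_⟩
  · -- concavity
    have hrep0 : ∀ t, f t = ∑ p : 𝒳 × 𝒴, (P p.1 * Qstar p.2) *
        Real.exp (t * (Real.log (Q p.1 p.2) - Real.log (Qstar p.2))) := by
      intro t
      rw [Fintype.sum_prod_type]
      show (∑ x, ∑ y, P x * Qstar y ^ (1 - t) * Q x y ^ t) = _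
      refine Finset.sum_congr rfl fun x _ => Finset.sum_congr rfl fun y _ => ?_
      have h := exp_form' (t := t) (u := 0) (hQstar y) (hQ x y)
      simp only [sub_zero, Real.rpow_zero, Real.rpow_one, mul_one] at h
      rw [mul_assoc, h, ← mul_assoc]
    have hConv := logsumexp_convex'
      (fun p : 𝒳 × 𝒴 => P p.1 * Qstar p.2)
      (fun p : 𝒳 × 𝒴 => Real.log (Q p.1 p.2) - Real.log (Qstar p.2))
      (fun p => mul_pos (hP p.1) (hQstar p.2))
    have hcon := (hConv.neg).subset (Set.subset_univ _) (convex_Icc 0 1)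
    have hμeq : μ₀ = -(fun t => Real.log (∑ p : 𝒳 × 𝒴, (P p.1 * Qstar p.2) *
        Real.exp (t * (Real.log (Q p.1 p.2) - Real.log (Qstar p.2))))) := by
      funext t
      show -Real.log (f t) = _
      rw [hrep0 t]
      rfl
    rw [hμeq]
    exact hcon
  · show -Real.log (f 1) = 0
    rw [hf1, Real.log_one, neg_zero]
  · have h1 : HasDerivAt (fun t => -Real.log (f t)) (-(S / f 1)) 1 :=
      (hF.log (by rw [hf1]; exact one_ne_zero)).neg
    have h2 : -(S / f 1) = -I - Dv := by rw [hf1, div_one, hSID]; ring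
    rw [h2] at h1
    exact h1
  · intro t ht
    have h1 : (t - 1) * S ≤ Real.log (f t) := by
      have h := Real.log_le_log (Real.exp_pos _) (hJen t)
      rwa [Real.log_exp] at h
    have h3 : (1 - t) * S ≤ S := by nlinarith [ht.1, ht.2]
    show -Real.log (f t) ≤ I + Dv
    rw [← hSID]
    linarith
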